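/- Let n ≥ 2 and let D = (diag(d⁽¹⁾),...,diag(d⁽ᵐ⁾)) and D̂ = (diag(d̂⁽¹⁾),...,diag(d̂⁽ᵐ⁾)) be m-tuples of n×n real diagonal matrices with d⁽ⁱ⁾, d̂⁽ⁱ⁾ ∈ ℝⁿ. If D̂ ≺ D, then for every linear map L : (H_n)^m → ℝ² one has W_L(D̂) ⊆ W_L(D). -/

import Mathlib

open Matrix

/-- The `L`-numerical range of an `m`-tuple of `n × n` complex matrices:
`W_L(A) = { L(U*A₁U, ..., U*A_mU) : U unitary }`. -/
noncomputable def LNumericalRange {n m l : ℕ}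
    (L : (Fin m → Matrix (Fin n) (Fin n) ℂ) →ₗ[ℝ] (Fin l → ℝ))
    (A : Fin m → Matrix (Fin n) (Fin n) ℂ) : Set (Fin l → ℝ) :=
  {y | ∃ U ∈ Matrix.unitaryGroup (Fin n) ℂ, y = L fun i => Uᴴ * A i * U}

/-- An `n × n` real matrix is a pinching matrix if for some `s < t` and `α ∈ [0,1]` its
`(s,s)` and `(t,t)` entries are `α`, its `(s,t)` and `(t,s)` entries are `1 − α`, the
remaining diagonal entries are `1`, and all other entries vanish. -/
def IsPinching {n : ℕ} (P : Matrix (Fin n) (Fin n) ℝ) : Prop :=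
  ∃ s t : Fin n, s < t ∧ ∃ α ∈ Set.Icc (0 : ℝ) 1,
    P = Matrix.of fun i j =>
      if i = s ∧ j = s then α
      else if i = t ∧ j = t then α
      else if i = s ∧ j = t then 1 - α
      else if i = t ∧ j = s then 1 - α
      else if i = j then 1 else 0

/-- `D̂ ≺ D` for tuples of diagonal matrices with diagonal vectors `dhat`, `d`: there are
finitely many pinching matrices `P₁, ..., P_k` with `dhat i = P₁P₂⋯P_k d i` for all `i`. -/
def PinchPrec {n m : ℕ} (dhat d : Fin m → Fin n → ℝ) : Prop :=
  ∃ Ps : List (Matrix (Fin n) (Fin n) ℝ),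
    (∀ P ∈ Ps, IsPinching P) ∧ ∀ i, dhat i = Ps.prod *ᵥ d i

namespace Stmt5Aux

/-! ### Auxiliary real-plane lemma -/

lemma exists_angle {a b : ℝ} (h : a^2 + b^2 = 1) : ∃ φ : ℝ, Real.cos φ = a ∧ Real.sin φ = b := by
  set z : ℂ := ⟨a, b⟩ with hz
  have habs : ‖z‖ = 1 := by
    rw [Complex.norm_def, Complex.normSq_mk]
    rw [show a * a + b * b = 1 by nlinarith]
    exact Real.sqrt_one
  have hz0 : z ≠ 0 := by
    intro h0; rw [h0] at habs; simp at habs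
  exact ⟨z.arg, by rw [Complex.cos_arg hz0, habs]; simp [hz],
    by rw [Complex.sin_arg z, habs]; simp [hz]⟩

lemma key2_case1 (w x y : Fin 2 → ℝ) (β : ℝ) (hβ0 : 0 ≤ β) (hβ1 : β ≤ 1)
    (φ lam : ℝ) (hφ : Real.cos φ • x + Real.sin φ • y = lam • w) :
    ∃ θ φ : ℝ, (Real.sin θ)^2 • w + (Real.sin θ * Real.cos θ * Real.cos φ) • x
      + (Real.sin θ * Real.cos θ * Real.sin φ) • y = β • w := by
  have hcont : ContinuousOn (fun θ : ℝ => (Real.sin θ)^2 + lam * (Real.sin θ * Real.cos θ))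
      (Set.Icc 0 (Real.pi/2)) := by fun_prop
  have h01 : (0:ℝ) ≤ Real.pi/2 := by positivity
  have h2 := intermediate_value_Icc h01 hcont
  have hmem : β ∈ Set.Icc
      ((fun θ : ℝ => (Real.sin θ)^2 + lam * (Real.sin θ * Real.cos θ)) 0)
      ((fun θ : ℝ => (Real.sin θ)^2 + lam * (Real.sin θ * Real.cos θ)) (Real.pi/2)) := by
    simp [Real.sin_pi_div_two, Real.cos_pi_div_two]
    constructor <;> nlinarith
  obtain ⟨θ, -, hθ⟩ := h2 hmem
  refine ⟨θ, φ, ?_⟩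
  have h3 : (Real.sin θ * Real.cos θ * Real.cos φ) • x + (Real.sin θ * Real.cos θ * Real.sin φ) • y
      = (Real.sin θ * Real.cos θ) • (Real.cos φ • x + Real.sin φ • y) := by
    module
  rw [add_assoc, h3, hφ, smul_smul, ← add_smul]
  rw [show (Real.sin θ)^2 + Real.sin θ * Real.cos θ * lam = β by rw [← hθ]; ring]

lemma key2 (w x y : Fin 2 → ℝ) (β : ℝ) (hβ0 : 0 ≤ β) (hβ1 : β ≤ 1) :
    ∃ θ φ : ℝ, (Real.sin θ)^2 • w + (Real.sin θ * Real.cos θ * Real.cos φ) • x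
      + (Real.sin θ * Real.cos θ * Real.sin φ) • y = β • w := by
  have norm1 : ∀ a b μ : ℝ, ¬(a = 0 ∧ b = 0) → a • x + b • y = μ • w →
      ∃ θ φ : ℝ, (Real.sin θ)^2 • w + (Real.sin θ * Real.cos θ * Real.cos φ) • x
      + (Real.sin θ * Real.cos θ * Real.sin φ) • y = β • w := by
    intro a b μ hab h
    have hr : 0 < Real.sqrt (a^2 + b^2) := by
      apply Real.sqrt_pos.2
      rcases not_and_or.1 hab with h' | h' <;> positivity
    set r := Real.sqrt (a^2 + b^2) with hrdef
    have hr2 : r^2 = a^2 + b^2 := Real.sq_sqrt (by positivity)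
    obtain ⟨φ, hc, hs⟩ := exists_angle (a := a/r) (b := b/r) (by field_simp; nlinarith)
    apply key2_case1 w x y β hβ0 hβ1 φ (μ/r)
    rw [hc, hs]
    have h4 : (a/r) • x + (b/r) • y = (1/r) • (a • x + b • y) := by
      simp [smul_smul]; module
    rw [h4, h, smul_smul]
    ring_nf
  by_cases hw : w = 0
  · refine ⟨0, 0, ?_⟩; simp [hw]
  by_cases hΔ : x 0 * y 1 - x 1 * y 0 = 0
  · by_cases hx : x = 0
    · exact norm1 1 0 0 (by simp) (by simp [hx])
    · have hx01 : x 0 ≠ 0 ∨ x 1 ≠ 0 := by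
        by_contra hc; push_neg at hc
        apply hx; funext j; fin_cases j <;> simp [hc.1, hc.2]
      rcases hx01 with h0 | h0
      · refine norm1 (y 0 / x 0) (-1) 0 (by simp) ?_
        funext j; fin_cases j <;> simp <;> field_simp <;> nlinarith [hΔ]
      · refine norm1 (y 1 / x 1) (-1) 0 (by simp) ?_
        funext j; fin_cases j <;> simp <;> field_simp <;> nlinarith [hΔ]
  · set Δ := x 0 * y 1 - x 1 * y 0 with hΔdef
    set c := (w 0 * y 1 - w 1 * y 0)/Δ with hc
    set e := (x 0 * w 1 - x 1 * w 0)/Δ with he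
    have hcomb : c • x + e • y = (1:ℝ) • w := by
      funext j; fin_cases j <;> simp [hc, he] <;> field_simp <;> ring
    by_cases hce : c = 0 ∧ e = 0
    · exfalso; apply hw
      have h5 := hcomb; rw [hce.1, hce.2] at h5; simpa using h5.symm
    · exact norm1 c e 1 hce hcomb

/-! ### The Givens rotation matrix and its properties -/

variable {n : ℕ}

noncomputable def givens (s t : Fin n) (θ φ : ℝ) : Matrix (Fin n) (Fin n) ℂ :=
  Matrix.of fun i j =>
    if i = s then (if j = s then (Real.cos θ : ℂ)
      else if j = t then -(Real.sin θ : ℂ) * ((Real.cos φ : ℂ) + (Real.sin φ : ℂ) * Complex.I)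
      else 0)
    else if i = t then (if j = s then (Real.sin θ : ℂ)
      else if j = t then (Real.cos θ : ℂ) * ((Real.cos φ : ℂ) + (Real.sin φ : ℂ) * Complex.I)
      else 0)
    else if i = j then 1 else 0

lemma sum_split {M : Type*} [AddCommMonoid M] (s t : Fin n) (hst : s ≠ t) (f : Fin n → M) :
    ∑ k, f k = f s + f t + ∑ k, (if k = s ∨ k = t then 0 else f k) := by
  have h : ∀ k : Fin n, f k = (if k = s then f s else 0) + (if k = t then f t else 0)
      + (if k = s ∨ k = t then 0 else f k) := by
    intro k
    by_cases h1 : k = s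
    · subst h1; simp [hst]
    · by_cases h2 : k = t
      · subst h2; simp [Ne.symm hst, h1]
      · simp [h1, h2]
  calc ∑ k, f k = ∑ k, ((if k = s then f s else 0) + (if k = t then f t else 0)
      + (if k = s ∨ k = t then 0 else f k)) := Finset.sum_congr rfl fun k _ => h k
    _ = _ := by rw [Finset.sum_add_distrib, Finset.sum_add_distrib]; simp

lemma givens_col (s t : Fin n) (hst : s ≠ t) (θ φ : ℝ) (k a : Fin n) (hk : k ≠ s) (hk' : k ≠ t) :
    givens s t θ φ k a = if k = a then 1 else 0 := by
  simp [givens, hk, hk']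

lemma conj_entry (s t : Fin n) (hst : s ≠ t) (θ φ : ℝ) (dd : Fin n → ℂ) (a b : Fin n) :
    ((givens s t θ φ)ᴴ * Matrix.diagonal dd * givens s t θ φ) a b
      = star (givens s t θ φ s a) * (dd s * givens s t θ φ s b)
        + star (givens s t θ φ t a) * (dd t * givens s t θ φ t b)
        + (if a = b ∧ ¬(a = s ∨ a = t) then dd a else 0) := by
  rw [Matrix.mul_assoc, Matrix.mul_apply]
  simp only [Matrix.conjTranspose_apply, Matrix.diagonal_mul]
  rw [sum_split s t hst]
  congr 1
  have h : ∀ k : Fin n, (if k = s ∨ k = t then 0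
      else star (givens s t θ φ k a) * (dd k * givens s t θ φ k b))
      = (if k = a then (if a = b ∧ ¬(a = s ∨ a = t) then dd a else 0) else 0) := by
    intro k
    by_cases hk : k = s ∨ k = t
    · rcases hk with rfl | rfl
      · simp only [true_or, if_true]
        by_cases hka : k = a
        · subst hka; simp
        · simp [hka]
      · simp only [or_true, if_true]
        by_cases hka : k = a
        · subst hka; simp
        · simp [hka]
    · push_neg at hk
      rw [if_neg (by tauto), givens_col s t hst θ φ k a hk.1 hk.2,
        givens_col s t hst θ φ k b hk.1 hk.2]
      by_cases hka : k = a
      · subst hka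
        by_cases hkb : k = b
        · subst hkb; simp [hk.1, hk.2]
        · simp [hkb]
      · simp [hka]
  rw [Finset.sum_congr rfl fun k _ => h k, Finset.sum_ite_eq']
  simp

lemma givens_mem (s t : Fin n) (hst : s ≠ t) (θ φ : ℝ) :
    givens s t θ φ ∈ Matrix.unitaryGroup (Fin n) ℂ := by
  rw [Matrix.mem_unitaryGroup_iff']
  have h1 : star (givens s t θ φ) * givens s t θ φ
      = (givens s t θ φ)ᴴ * Matrix.diagonal (fun _ => (1:ℂ)) * givens s t θ φ := by
    rw [Matrix.diagonal_one, Matrix.mul_one, Matrix.star_eq_conjTranspose]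
  rw [h1]
  ext a b
  rw [conj_entry s t hst θ φ]
  by_cases has : a = s <;> by_cases hat : a = t <;> by_cases hbs : b = s <;> by_cases hbt : b = t <;>
    simp only [givens, Matrix.of_apply, has, hat, hbs, hbt, hst, Ne.symm hst,
      Matrix.one_apply, if_true, if_false, ite_true, ite_false, or_self, not_true, not_false_iff,
      and_true, and_false, true_and, false_and, if_pos, eq_self_iff_true, one_mul, mul_one,
      add_zero, zero_add, true_or, or_true, not_or]
  all_goals
    try simp only [star_mul', star_neg, star_add, Complex.star_def, _root_.map_mul,
      _root_.map_add, _root_.map_neg,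
      Complex.conj_ofReal, Complex.conj_I, star_zero, zero_mul, mul_zero, add_zero, zero_add]
  all_goals
    have hθC : ((Real.sin θ:ℂ))^2 + ((Real.cos θ:ℂ))^2 = 1 := by
      exact_mod_cast congrArg (Complex.ofReal) (Real.sin_sq_add_cos_sq θ)
    have hφC : ((Real.sin φ:ℂ))^2 + ((Real.cos φ:ℂ))^2 = 1 := by
      exact_mod_cast congrArg (Complex.ofReal) (Real.sin_sq_add_cos_sq φ)
    first
      | ring1
      | linear_combination hθC
      | linear_combination ((Real.cos φ:ℂ)^2 - (Real.sin φ:ℂ)^2*Complex.I^2) * hθC + hφC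
          - (Real.sin φ:ℂ)^2 * Complex.I_sq
      | (simp [Ne.symm hbs]; done)
      | (simp [Ne.symm hbt]; done)
      | (simp [has, hat]; done)
      | (simp; done)

lemma conj_diag (s t : Fin n) (hst : s ≠ t) (θ φ : ℝ) (v : Fin n → ℝ) :
    (givens s t θ φ)ᴴ * Matrix.diagonal (fun j => (v j : ℂ)) * givens s t θ φ
      = Matrix.diagonal (fun j => (v j : ℂ))
        + (Real.sin θ ^ 2) • ((v t - v s) •
            (Matrix.single s s (1:ℂ) - Matrix.single t t 1))
        + (Real.sin θ * Real.cos θ * Real.cos φ) • ((v t - v s) •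
            (Matrix.single s t (1:ℂ) + Matrix.single t s 1))
        + (Real.sin θ * Real.cos θ * Real.sin φ) • ((v t - v s) •
            (Complex.I • Matrix.single s t (1:ℂ) - Complex.I • Matrix.single t s 1)) := by
  ext a b
  rw [conj_entry s t hst θ φ]
  by_cases has : a = s <;> by_cases hat : a = t <;> by_cases hbs : b = s <;> by_cases hbt : b = t <;>
    simp only [givens, Matrix.of_apply, has, hat, hbs, hbt, hst, Ne.symm hst,
      Matrix.add_apply, Matrix.sub_apply, Matrix.smul_apply, Matrix.diagonal_apply,
      Matrix.single, smul_eq_mul, Complex.real_smul, Complex.ofReal_mul, Complex.ofReal_sub,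
      Complex.ofReal_pow, Complex.ofReal_one,
      if_true, if_false, ite_true, ite_false, or_self, not_true, not_false_iff,
      and_true, and_false, true_and, false_and, if_pos, eq_self_iff_true, one_mul, mul_one,
      add_zero, zero_add, true_or, or_true, not_or, mul_zero, zero_mul, sub_zero, zero_sub, smul_zero]
  all_goals
    try simp only [star_mul', star_neg, star_add, Complex.star_def, _root_.map_mul,
      _root_.map_add, _root_.map_neg,
      Complex.conj_ofReal, Complex.conj_I, star_zero, zero_mul, mul_zero, add_zero, zero_add]
  all_goals
    have hθC : ((Real.sin θ:ℂ))^2 + ((Real.cos θ:ℂ))^2 = 1 := by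
      exact_mod_cast congrArg (Complex.ofReal) (Real.sin_sq_add_cos_sq θ)
    have hE : ((Real.cos φ:ℂ) - (Real.sin φ:ℂ)*Complex.I) * ((Real.cos φ:ℂ) + (Real.sin φ:ℂ)*Complex.I) = 1 := by
      have hφC : ((Real.sin φ:ℂ))^2 + ((Real.cos φ:ℂ))^2 = 1 := by
        exact_mod_cast congrArg (Complex.ofReal) (Real.sin_sq_add_cos_sq φ)
      linear_combination hφC - (Real.sin φ:ℂ)^2 * Complex.I_sq
    first
      | ring1
      | linear_combination ((v s:ℂ) - (v t:ℂ)) * hθC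
      | linear_combination ((v t:ℂ) - (v s:ℂ)) * hθC
      | linear_combination (v s:ℂ) * hθC
      | linear_combination (v t:ℂ) * hθC
      | linear_combination ((Real.sin θ:ℂ)^2*(v s:ℂ) + (Real.cos θ:ℂ)^2*(v t:ℂ)) * hE + (v t:ℂ) * hθC
      | (simp [Ne.symm hbs]; done)
      | (simp [Ne.symm hbt]; done)
      | (simp [Ne.symm hbs, Ne.symm hbt]; done)
      | (simp [Ne.symm has, Ne.symm hat]; done)
      | (simp [has, hat]; done)
      | (simp; done)

/-! ### Action of a pinching matrix -/

def pinchMat (s t : Fin n) (α : ℝ) : Matrix (Fin n) (Fin n) ℝ :=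
  Matrix.of fun i j =>
    if i = s ∧ j = s then α
    else if i = t ∧ j = t then α
    else if i = s ∧ j = t then 1 - α
    else if i = t ∧ j = s then 1 - α
    else if i = j then 1 else 0

lemma pinch_vec (s t : Fin n) (hst : s ≠ t) (α : ℝ) (v : Fin n → ℝ) (j : Fin n) :
    (pinchMat s t α *ᵥ v) j
      = if j = s then α * v s + (1-α) * v t
        else if j = t then (1-α) * v s + α * v t else v j := by
  simp only [Matrix.mulVec, dotProduct]
  rw [sum_split s t hst]
  by_cases hjs : j = s
  · subst hjs
    have h0 : ∑ k, (if k = j ∨ k = t then 0 else pinchMat j t α j k * v k) = 0 := by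
      apply Finset.sum_eq_zero
      intro k _
      by_cases hk : k = j ∨ k = t
      · simp [hk]
      · push_neg at hk
        simp [pinchMat, hk.1, hk.2, Ne.symm hk.1, hst]
    rw [h0]
    simp [pinchMat, hst, Ne.symm hst]
  · by_cases hjt : j = t
    · subst hjt
      have h0 : ∑ k, (if k = s ∨ k = j then 0 else pinchMat s j α j k * v k) = 0 := by
        apply Finset.sum_eq_zero
        intro k _
        by_cases hk : k = s ∨ k = j
        · simp [hk]
        · push_neg at hk
          simp [pinchMat, hk.1, hk.2, Ne.symm hk.2, hst]
      rw [h0]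
      simp [pinchMat, hst, Ne.symm hst]
    · have h0 : ∑ k, (if k = s ∨ k = t then 0 else pinchMat s t α j k * v k)
          = ∑ k, (if k = j then v j else 0) := by
        apply Finset.sum_congr rfl
        intro k _
        by_cases hk : k = s ∨ k = t
        · rcases hk with rfl | rfl <;> simp [Ne.symm hjs, Ne.symm hjt]
        · push_neg at hk
          by_cases hkj : k = j
          · subst hkj; simp [pinchMat, hk.1, hk.2, hjs, hjt]
          · simp [pinchMat, hjs, hjt, hkj, Ne.symm hkj, hk.1, hk.2]
      rw [h0, Finset.sum_ite_eq']
      simp [pinchMat, hjs, hjt, Ne.symm hjs, Ne.symm hjt]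

lemma pinch_diag (s t : Fin n) (hst : s ≠ t) (α : ℝ) (v : Fin n → ℝ) :
    Matrix.diagonal (fun j => ((pinchMat s t α *ᵥ v) j : ℂ))
      = Matrix.diagonal (fun j => (v j : ℂ))
        + (1-α) • ((v t - v s) •
            (Matrix.single s s (1:ℂ) - Matrix.single t t 1)) := by
  ext a b
  simp only [Matrix.diagonal_apply, Matrix.add_apply, Matrix.smul_apply, Matrix.sub_apply,
    Matrix.single, Matrix.of_apply, pinch_vec s t hst, smul_eq_mul, Complex.real_smul]
  by_cases hab : a = b <;> by_cases has : a = s <;> by_cases hat : a = t <;>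
      by_cases hbs : b = s <;> by_cases hbt : b = t <;>
    simp only [hab, has, hat, hbs, hbt, hst, Ne.symm hst, if_true, if_false, ite_true, ite_false,
      and_true, and_false, true_and, false_and, and_self, not_true, eq_self_iff_true,
      add_zero, zero_add, mul_zero, mul_one, sub_zero, zero_sub] <;>
    first
      | (push_cast; ring1)
      | (exfalso; apply hab; omega)
      | (exfalso; apply hab; rw [has, hbs])
      | (exfalso; apply hab; rw [hat, hbt])
      | (exfalso; exact hst (has ▸ hat ▸ rfl))
      | (simp [Ne.symm hbs, Ne.symm hbt]; done)
      | (simp [show s ≠ b from fun h => hab (has.trans h)]; done)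
      | (simp [show t ≠ b from fun h => hab (hat.trans h)]; done)
      | (simp [show s ≠ a from fun h => hab (by rw [← h, hbs])]; done)
      | (simp [show t ≠ a from fun h => hab (by rw [← h, hbt])]; done)
      | (simp; done)


/-! ### Putting things together -/

variable {m : ℕ}

/-- Conjugation by a fixed matrix, as an `ℝ`-linear map on `m`-tuples. -/
noncomputable def conjL (U : Matrix (Fin n) (Fin n) ℂ) :
    (Fin m → Matrix (Fin n) (Fin n) ℂ) →ₗ[ℝ] (Fin m → Matrix (Fin n) (Fin n) ℂ) where
  toFun X := fun i => Uᴴ * X i * U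
  map_add' X Y := by
    funext i
    simp [Matrix.mul_add, Matrix.add_mul]
  map_smul' r X := by
    funext i
    simp [Matrix.mul_smul, Matrix.smul_mul]

lemma core (L : (Fin m → Matrix (Fin n) (Fin n) ℂ) →ₗ[ℝ] (Fin 2 → ℝ))
    (d : Fin m → Fin n → ℝ) (s t : Fin n) (hst : s ≠ t) (α : ℝ)
    (hα0 : 0 ≤ α) (hα1 : α ≤ 1) :
    L (fun i => Matrix.diagonal fun j => ((pinchMat s t α *ᵥ d i) j : ℂ))
      ∈ LNumericalRange L (fun i => Matrix.diagonal fun j => (d i j : ℂ)) := by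
  set Am : Fin m → Matrix (Fin n) (Fin n) ℂ := fun i => (d i t - d i s) •
      (Matrix.single s s (1:ℂ) - Matrix.single t t 1) with hAm
  set Bm : Fin m → Matrix (Fin n) (Fin n) ℂ := fun i => (d i t - d i s) •
      (Matrix.single s t (1:ℂ) + Matrix.single t s 1) with hBm
  set Cm : Fin m → Matrix (Fin n) (Fin n) ℂ := fun i => (d i t - d i s) •
      (Complex.I • Matrix.single s t (1:ℂ) - Complex.I • Matrix.single t s 1) with hCm
  set Dt : Fin m → Matrix (Fin n) (Fin n) ℂ := fun i => Matrix.diagonal fun j => (d i j : ℂ) with hDt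
  obtain ⟨θ, φ, hsol⟩ := key2 (L Am) (L Bm) (L Cm) (1-α) (by linarith) (by linarith)
  refine ⟨givens s t θ φ, givens_mem s t hst θ φ, ?_⟩
  have hhat : (fun i => Matrix.diagonal fun j => ((pinchMat s t α *ᵥ d i) j : ℂ))
      = Dt + (1-α) • Am := by
    funext i
    exact pinch_diag s t hst α (d i)
  have hconj : (fun i => (givens s t θ φ)ᴴ * Dt i * givens s t θ φ)
      = Dt + (Real.sin θ ^ 2) • Am + (Real.sin θ * Real.cos θ * Real.cos φ) • Bm
        + (Real.sin θ * Real.cos θ * Real.sin φ) • Cm := by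
    funext i
    exact conj_diag s t hst θ φ (d i)
  have h1 : L (fun i => Matrix.diagonal fun j => ((pinchMat s t α *ᵥ d i) j : ℂ))
      = L Dt + (1-α) • L Am := by
    rw [hhat, map_add, _root_.map_smul]
  have h2 : L (fun i => (givens s t θ φ)ᴴ * Dt i * givens s t θ φ)
      = L Dt + (Real.sin θ ^ 2) • L Am + (Real.sin θ * Real.cos θ * Real.cos φ) • L Bm
        + (Real.sin θ * Real.cos θ * Real.sin φ) • L Cm := by
    rw [hconj, map_add, map_add, map_add, _root_.map_smul, _root_.map_smul, _root_.map_smul]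
  rw [h1, h2, add_assoc, add_assoc, ← add_assoc ((Real.sin θ ^ 2) • L Am), hsol]

lemma step (L : (Fin m → Matrix (Fin n) (Fin n) ℂ) →ₗ[ℝ] (Fin 2 → ℝ))
    (d : Fin m → Fin n → ℝ) (P : Matrix (Fin n) (Fin n) ℝ) (hP : IsPinching P) :
    LNumericalRange L (fun i => Matrix.diagonal fun j => ((P *ᵥ d i) j : ℂ))
      ⊆ LNumericalRange L (fun i => Matrix.diagonal fun j => (d i j : ℂ)) := by
  obtain ⟨s, t, hlt, α, hα, hPdef⟩ := hP
  have hPm : P = pinchMat s t α := hPdef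
  rintro y ⟨U, hU, rfl⟩
  obtain ⟨V, hV, hEq⟩ := core (L.comp (conjL U)) d s t (ne_of_lt hlt) α hα.1 hα.2
  refine ⟨V * U, mul_mem hV hU, ?_⟩
  simp only [LinearMap.comp_apply, conjL, LinearMap.coe_mk, AddHom.coe_mk] at hEq
  rw [hPm]
  rw [hEq]
  congr 1
  funext i
  simp [Matrix.conjTranspose_mul, Matrix.mul_assoc]

lemma listStep (L : (Fin m → Matrix (Fin n) (Fin n) ℂ) →ₗ[ℝ] (Fin 2 → ℝ))
    (Ps : List (Matrix (Fin n) (Fin n) ℝ)) (hPs : ∀ P ∈ Ps, IsPinching P) :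
    ∀ d : Fin m → Fin n → ℝ,
      LNumericalRange L (fun i => Matrix.diagonal fun j => ((Ps.prod *ᵥ d i) j : ℂ))
        ⊆ LNumericalRange L (fun i => Matrix.diagonal fun j => (d i j : ℂ)) := by
  induction Ps with
  | nil =>
    intro d
    simp [Matrix.one_mulVec]
  | cons P Ps ih =>
    intro d
    have hrw : (fun i => Matrix.diagonal fun j => (((P :: Ps).prod *ᵥ d i) j : ℂ))
        = fun i => Matrix.diagonal fun j => ((P *ᵥ (Ps.prod *ᵥ d i)) j : ℂ) := by
      funext i
      rw [List.prod_cons, ← Matrix.mulVec_mulVec]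
    rw [hrw]
    exact (step L (fun i => Ps.prod *ᵥ d i) P (hPs P (List.mem_cons_self (a := P) (l := Ps)))).trans
      (ih (fun P hP => hPs P (List.mem_cons_of_mem _ hP)) d)

end Stmt5Aux

/-- If `n ≥ 2` and `D̂ ≺ D`, then `W_L(D̂) ⊆ W_L(D)` for every linear `L : H_n^m → ℝ²`. -/
theorem stmt5 {n m : ℕ} (hn : 2 ≤ n) (d dhat : Fin m → Fin n → ℝ)
    (hprec : PinchPrec dhat d)
    (L : (Fin m → Matrix (Fin n) (Fin n) ℂ) →ₗ[ℝ] (Fin 2 → ℝ)) :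
    LNumericalRange L (fun i => Matrix.diagonal fun j => (dhat i j : ℂ)) ⊆
      LNumericalRange L (fun i => Matrix.diagonal fun j => (d i j : ℂ)) := by
  obtain ⟨Ps, hPs, hd⟩ := hprec
  have hrw : (fun i => Matrix.diagonal fun j => ((dhat i j : ℝ) : ℂ))
      = fun i => Matrix.diagonal fun j => ((Ps.prod *ᵥ d i) j : ℂ) := by
    funext i
    rw [hd i]
  rw [hrw]
  exact Stmt5Aux.listStep L Ps hPs d
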